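/- Let b, d : ℕ → ℝ be the rates of a solvable birth-death process with infinite state space ℕ (d polynomial of degree ≤ 2 with d(0)=0, b-d polynomial of degree ≤ 1, positivity of rates, summable invariant measure, strictly negative nonzero eigenvalues). Then either d(x) = c·x and b is a positive constant (immigration-death process), or d(x) = c·x and b(x) = β₁·x + β₀ with β₀, β₁ > 0 and β₁ < c (Meixner process). -/

import Mathlib

/-- Classification of solvable birth-death processes with infinite state space ℕ:
either an immigration-death process or a Meixner process. -/
theorem classification_solvable_bd (b d : ℕ → ℝ) (pb pd : Polynomial ℝ)
    (hbe : ∀ x : ℕ, b x = pb.eval (x : ℝ)) (hde : ∀ x : ℕ, d x = pd.eval (x : ℝ))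
    (hdeg_d : pd.natDegree ≤ 2) (hdeg_bd : (pb - pd).natDegree ≤ 1)
    (hd0 : d 0 = 0) (hb_pos : ∀ x : ℕ, 0 < b x) (hd_pos : ∀ x : ℕ, 0 < d (x + 1))
    (hsum : Summable (fun x : ℕ => ∏ k ∈ Finset.range (x + 1), b k / d (k + 1)))
    (heig : ∀ n : ℕ, 1 ≤ n →
      (n : ℝ) * ((b 1 - d 1) - (b 0 - d 0))
        + (1 / 2) * (n : ℝ) * ((n : ℝ) - 1) * (d 2 - 2 * d 1 + d 0) < 0) :
    (∃ c b₀ : ℝ, 0 < c ∧ 0 < b₀ ∧ (∀ x : ℕ, d x = c * (x : ℝ)) ∧ ∀ x : ℕ, b x = b₀) ∨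
    (∃ c β₀ β₁ : ℝ, 0 < c ∧ 0 < β₀ ∧ 0 < β₁ ∧ β₁ < c ∧
      (∀ x : ℕ, d x = c * (x : ℝ)) ∧ ∀ x : ℕ, b x = β₁ * (x : ℝ) + β₀) := by
  -- expand polynomials via coefficients
  have hpb_deg : pb.natDegree ≤ 2 := by
    have := Polynomial.natDegree_add_le (pb - pd) pd
    simpa using this.trans (max_le (hdeg_bd.trans one_le_two) hdeg_d)
  have hc2 : pb.coeff 2 = pd.coeff 2 := by
    have h := Polynomial.coeff_eq_zero_of_natDegree_lt (lt_of_le_of_lt hdeg_bd one_lt_two)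
    rw [Polynomial.coeff_sub] at h
    linarith
  set A2 := pd.coeff 2 with hA2
  set A1 := pd.coeff 1 with hA1
  set A0 := pd.coeff 0 with hA0
  set B1 := pb.coeff 1 with hB1
  set B0 := pb.coeff 0 with hB0
  have hdx : ∀ x : ℕ, d x = A0 + A1 * x + A2 * (x:ℝ)^2 := by
    intro x
    rw [hde x, Polynomial.eval_eq_sum_range' (lt_of_le_of_lt hdeg_d (by norm_num : (2:ℕ) < 3))]
    simp [Finset.sum_range_succ]
    rfl
  have hbx : ∀ x : ℕ, b x = B0 + B1 * x + A2 * (x:ℝ)^2 := by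
    intro x
    rw [hbe x, Polynomial.eval_eq_sum_range' (lt_of_le_of_lt hpb_deg (by norm_num : (2:ℕ) < 3))]
    simp [Finset.sum_range_succ, hc2]
    rfl
  have hA0z : A0 = 0 := by
    have := hd0; rw [hdx 0] at this; simpa using this
  have key : ∀ n : ℕ, 1 ≤ n → (n:ℝ) * (B1 - A1) + (n:ℝ) * ((n:ℝ) - 1) * A2 < 0 := by
    intro n hn
    have h := heig n hn
    rw [hdx 0, hdx 1, hdx 2, hbx 0, hbx 1] at h
    push_cast at h
    nlinarith [h]
  -- A2 = 0
  have hA2z : A2 = 0 := by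
    rcases lt_trichotomy A2 0 with h | h | h
    · exfalso
      obtain ⟨N, hN⟩ := exists_nat_gt (A1 / (-A2))
      have hN' : A1 < (N:ℝ) * (-A2) := by
        rwa [div_lt_iff₀ (by linarith)] at hN
      have hp := hd_pos N
      rw [hdx (N + 1)] at hp
      push_cast at hp
      nlinarith [Nat.cast_nonneg (α := ℝ) N]
    · exact h
    · exfalso
      obtain ⟨N, hN⟩ := exists_nat_gt (max 1 ((A1 - B1) / A2 + 1))
      have hN1 : (1:ℝ) < N := lt_of_le_of_lt (le_max_left _ _) hN
      have hNn : 1 ≤ N := by exact_mod_cast hN1.le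
      have hN2 : (A1 - B1) / A2 + 1 < N := lt_of_le_of_lt (le_max_right _ _) hN
      have hN3 : A1 - B1 < ((N:ℝ) - 1) * A2 := by
        rw [div_add' _ _ _ (ne_of_gt h), div_lt_iff₀ h] at hN2
        nlinarith
      have := key N hNn
      nlinarith
  -- Now d x = A1 x, b x = B0 + B1 x
  have hdx' : ∀ x : ℕ, d x = A1 * x := by
    intro x; rw [hdx x, hA0z, hA2z]; ring
  have hbx' : ∀ x : ℕ, b x = B1 * x + B0 := by
    intro x; rw [hbx x, hA2z]; ring
  have hA1p : 0 < A1 := by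
    have := hd_pos 0; rw [hdx' 1] at this; simpa using this
  have hB0p : 0 < B0 := by
    have := hb_pos 0; rw [hbx' 0] at this; simpa using this
  have hB1lt : B1 < A1 := by
    have := key 1 le_rfl; simp at this; linarith
  have hB1nn : 0 ≤ B1 := by
    by_contra hB1
    push_neg at hB1
    obtain ⟨N, hN⟩ := exists_nat_gt (B0 / (-B1))
    have hN' : B0 < (N:ℝ) * (-B1) := by
      rwa [div_lt_iff₀ (by linarith)] at hN
    have hp := hb_pos N
    rw [hbx' N] at hp
    nlinarith
  rcases eq_or_lt_of_le hB1nn with hB1z | hB1p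
  · left
    exact ⟨A1, B0, hA1p, hB0p, hdx', fun x => by rw [hbx' x, ← hB1z]; ring⟩
  · right
    exact ⟨A1, B0, B1, hA1p, hB0p, hB1p, hB1lt, hdx', hbx'⟩
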